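/- Let V be a graded vector space. The maps Δ_1, Δ_2 on Diass^c(V) = TV ⊗ V ⊗ TV given by Δ_1(v_1⋯v_n ⊗ v ⊗ w_1⋯w_m) = Σ_{i,j≥0, i+j+1≤m} (v_1⋯v_n ⊗ v ⊗ w_1⋯w_i) ⊗ (w_{i+1}⋯w_{i+j} ⊗ w_{i+j+1} ⊗ w_{i+j+2}⋯w_m) and Δ_2(v_1⋯v_n ⊗ v ⊗ w_1⋯w_m) = Σ_{i,j≥0, i+j+1≤n} (v_1⋯v_i ⊗ v_{i+1} ⊗ v_{i+2}⋯v_{i+j+1}) ⊗ (v_{i+j+2}⋯v_n ⊗ v ⊗ w_1⋯w_m) make Diass^c(V) a diassociative coalgebra, i.e. (id ⊗ Δ_1)Δ_1 = (Δ_1 ⊗ id)Δ_1 = (id ⊗ Δ_2)Δ_1, (Δ_2 ⊗ id)Δ_1 = (id ⊗ Δ_1)Δ_2, and (Δ_1 ⊗ id)Δ_2 = (id ⊗ Δ_2)Δ_2 = (Δ_2 ⊗ id)Δ_2. -/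
import Mathlib


open scoped TensorProduct

section

variable {K : Type*} [Field K] {V : Type*}

/-- The free module `Diass^c(V) = TV ⊗ V ⊗ TV` on the words
`v₁ ⋯ v_n ⊗ v ⊗ w₁ ⋯ w_m` (with `V` the given basis). -/
abbrev DiassC (K V : Type*) [Field K] := (List V × V × List V) →₀ K

/-- The basis element of `Diass^c(V)` corresponding to a word. -/
noncomputable def wd (x : List V × V × List V) : DiassC K V := Finsupp.single x 1

/-- `Δ₁` on basis elements:
`Δ₁(v₁⋯v_n ⊗ v ⊗ w₁⋯w_m) = Σ_{i,j ≥ 0, i+j+1 ≤ m}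
  (v₁⋯v_n ⊗ v ⊗ w₁⋯w_i) ⊗ (w_{i+1}⋯w_{i+j} ⊗ w_{i+j+1} ⊗ w_{i+j+2}⋯w_m)`. -/
noncomputable def delta1Fun (x : List V × V × List V) : DiassC K V ⊗[K] DiassC K V :=
  ∑ i ∈ Finset.range x.2.2.length, ∑ j ∈ Finset.range (x.2.2.length - i),
    wd (x.1, x.2.1, x.2.2.take i) ⊗ₜ[K]
      wd ((x.2.2.drop i).take j, x.2.2.getD (i + j) x.2.1, x.2.2.drop (i + j + 1))

/-- `Δ₂` on basis elements:
`Δ₂(v₁⋯v_n ⊗ v ⊗ w₁⋯w_m) = Σ_{i,j ≥ 0, i+j+1 ≤ n}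
  (v₁⋯v_i ⊗ v_{i+1} ⊗ v_{i+2}⋯v_{i+j+1}) ⊗ (v_{i+j+2}⋯v_n ⊗ v ⊗ w₁⋯w_m)`. -/
noncomputable def delta2Fun (x : List V × V × List V) : DiassC K V ⊗[K] DiassC K V :=
  ∑ i ∈ Finset.range x.1.length, ∑ j ∈ Finset.range (x.1.length - i),
    wd (x.1.take i, x.1.getD i x.2.1, (x.1.drop (i + 1)).take j) ⊗ₜ[K]
      wd (x.1.drop (i + j + 1), x.2.1, x.2.2)

/-- The comultiplication `Δ₁ : Diass^c(V) → Diass^c(V) ⊗ Diass^c(V)`. -/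
noncomputable def delta1 : DiassC K V →ₗ[K] DiassC K V ⊗[K] DiassC K V :=
  Finsupp.lift (DiassC K V ⊗[K] DiassC K V) K (List V × V × List V) delta1Fun

/-- The comultiplication `Δ₂ : Diass^c(V) → Diass^c(V) ⊗ Diass^c(V)`. -/
noncomputable def delta2 : DiassC K V →ₗ[K] DiassC K V ⊗[K] DiassC K V :=
  Finsupp.lift (DiassC K V ⊗[K] DiassC K V) K (List V × V × List V) delta2Fun

end

section AuxHelpers

variable {β : Type*} {M : Type*} [AddCommMonoid M]

private lemma aux_tdt {β : Type*} (l : List β) {a b a' b' : ℕ} (h1 : a = a') (h2 : b = b') :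
    List.take a (List.drop b l) = List.take a' (List.drop b' l) := by rw [h1, h2]

private lemma aux_dcong {β : Type*} (l : List β) {a a' : ℕ} (h : a = a') :
    List.drop a l = List.drop a' l := by rw [h]

private lemma aux_tcong {β : Type*} (l : List β) {a a' : ℕ} (h : a = a') :
    List.take a l = List.take a' l := by rw [h]

private lemma aux_getD_take {β : Type*} {l : List β} {n k : ℕ} (d d' : β) (h1 : k < n)
    (h2 : k < l.length) : (l.take n).getD k d = l.getD k d' := by
  rw [List.getD_eq_getElem _ _ (by rw [List.length_take]; omega),
    List.getD_eq_getElem _ _ h2, List.getElem_take]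

private lemma aux_getD_drop {β : Type*} {l : List β} {a k k' : ℕ} (d d' : β) (h : a + k = k')
    (h2 : k' < l.length) : (l.drop a).getD k d = l.getD k' d' := by
  subst h
  rw [List.getD_eq_getElem _ _ (by rw [List.length_drop]; omega),
    List.getD_eq_getElem _ _ h2, List.getElem_drop]

private lemma aux_getD_congr {β : Type*} {l : List β} {k k' : ℕ} (d d' : β) (h : k = k')
    (h2 : k < l.length) : l.getD k d = l.getD k' d' := by
  subst h
  rw [List.getD_eq_getElem _ _ h2, List.getD_eq_getElem _ _ h2]

private lemma aux_sum_range_guard {N r : ℕ} (h : r ≤ N) (g : ℕ → M) :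
    ∑ i ∈ Finset.range r, g i = ∑ i ∈ Finset.range N, if i < r then g i else 0 := by
  rw [← Finset.sum_filter]
  congr 1
  ext i
  simp only [Finset.mem_filter, Finset.mem_range]
  omega

private lemma aux_sum4 (N r1 : ℕ) (r2 : ℕ → ℕ) (r3 : ℕ → ℕ → ℕ) (r4 : ℕ → ℕ → ℕ → ℕ)
    (f : ℕ → ℕ → ℕ → ℕ → M)
    (h1 : r1 ≤ N) (h2 : ∀ i, r2 i ≤ N) (h3 : ∀ i j, r3 i j ≤ N)
    (h4 : ∀ i j p, r4 i j p ≤ N) :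
    (∑ i ∈ Finset.range r1, ∑ j ∈ Finset.range (r2 i), ∑ p ∈ Finset.range (r3 i j),
      ∑ q ∈ Finset.range (r4 i j p), f i j p q)
    = ∑ t ∈ (Finset.range N ×ˢ Finset.range N ×ˢ Finset.range N ×ˢ Finset.range N).filter
        (fun t => t.1 < r1 ∧ t.2.1 < r2 t.1 ∧ t.2.2.1 < r3 t.1 t.2.1 ∧
          t.2.2.2 < r4 t.1 t.2.1 t.2.2.1),
        f t.1 t.2.1 t.2.2.1 t.2.2.2 := by
  rw [Finset.sum_filter]
  simp only [Finset.sum_product]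
  rw [aux_sum_range_guard h1]
  refine Finset.sum_congr rfl fun i _ => ?_
  by_cases hi1 : i < r1
  · rw [if_pos hi1]
    simp only [hi1, true_and]
    rw [aux_sum_range_guard (h2 i)]
    refine Finset.sum_congr rfl fun j _ => ?_
    by_cases hj1 : j < r2 i
    · rw [if_pos hj1]
      simp only [hj1, true_and]
      rw [aux_sum_range_guard (h3 i j)]
      refine Finset.sum_congr rfl fun p _ => ?_
      by_cases hp1 : p < r3 i j
      · rw [if_pos hp1]
        simp only [hp1, true_and]
        rw [aux_sum_range_guard (h4 i j p)]
      · simp [hp1]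
    · simp [hj1]
  · simp [hi1]

end AuxHelpers
set_option synthInstance.maxHeartbeats 1000000
set_option maxHeartbeats 1000000

private lemma aux_core1 {K : Type*} [Field K] {V : Type*} (L : List V) (v : V) (R : List V) :
    (TensorProduct.map LinearMap.id (delta1 (K := K) (V := V)) ∘ₗ delta1) (wd (L, v, R))
      = ((TensorProduct.assoc K (DiassC K V) (DiassC K V) (DiassC K V)).toLinearMap
          ∘ₗ TensorProduct.map delta1 LinearMap.id ∘ₗ delta1) (wd (L, v, R)) := by
  simp only [LinearMap.comp_apply, delta1, delta2, wd, Finsupp.lift_apply,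
    Finsupp.sum_single_index, zero_smul, one_smul, delta1Fun, delta2Fun,
    map_sum, TensorProduct.map_tmul, LinearMap.id_coe, id_eq,
    TensorProduct.tmul_sum, TensorProduct.sum_tmul, TensorProduct.assoc_tmul,
    List.length_take, List.length_drop, LinearEquiv.coe_coe]
  refine Eq.trans (aux_sum4 R.length R.length (fun i => R.length - i)
      (fun i j => R.length - (i + j + 1)) (fun i j p => R.length - (i + j + 1) - p)
      (fun i j p q => (Finsupp.single (L, v, List.take i R) 1 : DiassC K V) ⊗ₜ[K]
        ((Finsupp.single (List.take j (List.drop i R), R.getD (i + j) v,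
            List.take p (List.drop (i + j + 1) R)) 1 : DiassC K V) ⊗ₜ[K]
         (Finsupp.single (List.take q (List.drop p (List.drop (i + j + 1) R)),
            (List.drop (i + j + 1) R).getD (p + q) (R.getD (i + j) v),
            List.drop (p + q + 1) (List.drop (i + j + 1) R)) 1 : DiassC K V)))
      (le_refl _) (fun i => Nat.sub_le _ _) (fun i j => Nat.sub_le _ _)
      (fun i j p => le_trans (Nat.sub_le _ _) (Nat.sub_le _ _)))
    (Eq.trans ?_ (aux_sum4 R.length R.length (fun i => R.length - i)
      (fun i j => i ⊓ R.length) (fun i j a => i ⊓ R.length - a)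
      (fun i j a b => (Finsupp.single (L, v, List.take a (List.take i R)) 1 : DiassC K V) ⊗ₜ[K]
        ((Finsupp.single (List.take b (List.drop a (List.take i R)),
            (List.take i R).getD (a + b) v,
            List.drop (a + b + 1) (List.take i R)) 1 : DiassC K V) ⊗ₜ[K]
         (Finsupp.single (List.take j (List.drop i R), R.getD (i + j) v,
            List.drop (i + j + 1) R) 1 : DiassC K V)))
      (le_refl _) (fun i => Nat.sub_le _ _) (fun i j => min_le_right _ _)
      (fun i j a => le_trans (Nat.sub_le _ _) (min_le_right _ _))).symm)
  refine Finset.sum_nbij' (fun t => (t.1 + t.2.1 + 1 + t.2.2.1, t.2.2.2, t.1, t.2.1))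
    (fun t => (t.2.2.1, t.2.2.2, t.1 - t.2.2.1 - t.2.2.2 - 1, t.2.1)) ?_ ?_ ?_ ?_ ?_
  · intro t ht
    obtain ⟨i, j, p, q⟩ := t
    simp only [Finset.mem_filter, Finset.mem_product, Finset.mem_range] at ht ⊢
    omega
  · intro t ht
    obtain ⟨i, j, a, b⟩ := t
    simp only [Finset.mem_filter, Finset.mem_product, Finset.mem_range] at ht ⊢
    omega
  · intro t ht
    obtain ⟨i, j, p, q⟩ := t
    dsimp only
    simp only [Prod.mk.injEq, true_and, and_true]
    omega
  · intro t ht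
    obtain ⟨i, j, a, b⟩ := t
    simp only [Finset.mem_filter, Finset.mem_product, Finset.mem_range] at ht
    dsimp only
    simp only [Prod.mk.injEq, true_and, and_true]
    omega
  · intro t ht
    obtain ⟨i, j, p, q⟩ := t
    simp only [Finset.mem_filter, Finset.mem_product, Finset.mem_range] at ht
    dsimp only
    refine congrArg₂ (TensorProduct.tmul K) ?_ (congrArg₂ (TensorProduct.tmul K) ?_ ?_) <;>
      refine congrArg (fun z : List V × V × List V => (Finsupp.single z 1 : DiassC K V)) ?_ <;>
      simp only [Prod.mk.injEq, true_and, and_true]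
    · rw [List.take_take]
      refine aux_tcong _ ?_
      omega
    · refine ⟨?_, ?_, ?_⟩
      · rw [List.drop_take, List.take_take]
        refine aux_tdt _ ?_ rfl
        omega
      · refine Eq.symm (aux_getD_take v v ?_ ?_) <;> omega
      · rw [List.drop_take]
        refine aux_tdt _ ?_ rfl
        omega
    · refine ⟨?_, ?_, ?_⟩
      · rw [List.drop_drop]
      · refine aux_getD_drop _ _ ?_ ?_ <;> omega
      · rw [List.drop_drop]
        refine aux_dcong _ ?_
        omega
set_option synthInstance.maxHeartbeats 1000000
set_option maxHeartbeats 1000000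

private lemma aux_core2 {K : Type*} [Field K] {V : Type*} (L : List V) (v : V) (R : List V) :
    (TensorProduct.map LinearMap.id (delta1 (K := K) (V := V)) ∘ₗ delta1) (wd (L, v, R))
      = (TensorProduct.map LinearMap.id delta2 ∘ₗ delta1) (wd (L, v, R)) := by
  simp only [LinearMap.comp_apply, delta1, delta2, wd, Finsupp.lift_apply,
    Finsupp.sum_single_index, zero_smul, one_smul, delta1Fun, delta2Fun,
    map_sum, TensorProduct.map_tmul, LinearMap.id_coe, id_eq,
    TensorProduct.tmul_sum, TensorProduct.sum_tmul, TensorProduct.assoc_tmul,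
    List.length_take, List.length_drop, LinearEquiv.coe_coe]
  refine Eq.trans (aux_sum4 R.length R.length (fun i => R.length - i)
      (fun i j => R.length - (i + j + 1)) (fun i j p => R.length - (i + j + 1) - p)
      (fun i j p q => (Finsupp.single (L, v, List.take i R) 1 : DiassC K V) ⊗ₜ[K]
        ((Finsupp.single (List.take j (List.drop i R), R.getD (i + j) v,
            List.take p (List.drop (i + j + 1) R)) 1 : DiassC K V) ⊗ₜ[K]
         (Finsupp.single (List.take q (List.drop p (List.drop (i + j + 1) R)),
            (List.drop (i + j + 1) R).getD (p + q) (R.getD (i + j) v),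
            List.drop (p + q + 1) (List.drop (i + j + 1) R)) 1 : DiassC K V)))
      (le_refl _) (fun i => Nat.sub_le _ _) (fun i j => Nat.sub_le _ _)
      (fun i j p => le_trans (Nat.sub_le _ _) (Nat.sub_le _ _)))
    (Eq.trans ?_ (aux_sum4 R.length R.length (fun i => R.length - i)
      (fun i j => j ⊓ (R.length - i)) (fun i j a => j ⊓ (R.length - i) - a)
      (fun i j a b => (Finsupp.single (L, v, List.take i R) 1 : DiassC K V) ⊗ₜ[K]
        ((Finsupp.single (List.take a (List.take j (List.drop i R)),
            (List.take j (List.drop i R)).getD a (R.getD (i + j) v),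
            List.take b (List.drop (a + 1) (List.take j (List.drop i R)))) 1 : DiassC K V) ⊗ₜ[K]
         (Finsupp.single (List.drop (a + b + 1) (List.take j (List.drop i R)),
            R.getD (i + j) v, List.drop (i + j + 1) R) 1 : DiassC K V)))
      (le_refl _) (fun i => Nat.sub_le _ _)
      (fun i j => le_trans (min_le_right _ _) (Nat.sub_le _ _))
      (fun i j a => le_trans (Nat.sub_le _ _) (le_trans (min_le_right _ _) (Nat.sub_le _ _)))).symm)
  refine Finset.sum_nbij' (fun t => (t.1, t.2.1 + t.2.2.1 + t.2.2.2 + 1, t.2.1, t.2.2.1))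
    (fun t => (t.1, t.2.2.1, t.2.2.2, t.2.1 - t.2.2.1 - t.2.2.2 - 1)) ?_ ?_ ?_ ?_ ?_
  · intro t ht
    obtain ⟨i, j, p, q⟩ := t
    simp only [Finset.mem_filter, Finset.mem_product, Finset.mem_range] at ht ⊢
    omega
  · intro t ht
    obtain ⟨i, j, a, b⟩ := t
    simp only [Finset.mem_filter, Finset.mem_product, Finset.mem_range] at ht ⊢
    omega
  · intro t ht
    obtain ⟨i, j, p, q⟩ := t
    dsimp only
    simp only [Prod.mk.injEq, true_and, and_true]
    omega
  · intro t ht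
    obtain ⟨i, j, a, b⟩ := t
    simp only [Finset.mem_filter, Finset.mem_product, Finset.mem_range] at ht
    dsimp only
    simp only [Prod.mk.injEq, true_and, and_true]
    omega
  · intro t ht
    obtain ⟨i, j, p, q⟩ := t
    simp only [Finset.mem_filter, Finset.mem_product, Finset.mem_range] at ht
    dsimp only
    refine congrArg₂ (TensorProduct.tmul K) ?_ (congrArg₂ (TensorProduct.tmul K) ?_ ?_) <;>
      refine congrArg (fun z : List V × V × List V => (Finsupp.single z 1 : DiassC K V)) ?_ <;>
      simp only [Prod.mk.injEq, true_and, and_true]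
    · refine ⟨?_, ?_, ?_⟩
      · rw [List.take_take]
        refine aux_tcong _ ?_
        omega
      · refine Eq.symm ((aux_getD_take _ v ?_ ?_).trans (aux_getD_drop _ _ ?_ ?_)) <;>
          (try simp only [List.length_drop]) <;> omega
      · simp only [List.drop_take, List.drop_drop, List.take_take]
        refine aux_tdt _ ?_ ?_ <;> omega
    · refine ⟨?_, ?_, ?_⟩
      · simp only [List.drop_take, List.drop_drop]
        refine aux_tdt _ ?_ ?_ <;> omega
      · refine aux_getD_drop _ _ ?_ ?_ <;> omega
      · simp only [List.drop_drop]
        refine aux_dcong _ ?_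
        omega

private lemma aux_core3 {K : Type*} [Field K] {V : Type*} (L : List V) (v : V) (R : List V) :
    ((TensorProduct.assoc K (DiassC K V) (DiassC K V) (DiassC K V)).toLinearMap
        ∘ₗ TensorProduct.map delta2 LinearMap.id ∘ₗ delta1) (wd (L, v, R))
      = (TensorProduct.map LinearMap.id delta1 ∘ₗ delta2) (wd (L, v, R)) := by
  simp only [LinearMap.comp_apply, delta1, delta2, wd, Finsupp.lift_apply,
    Finsupp.sum_single_index, zero_smul, one_smul, delta1Fun, delta2Fun,
    map_sum, TensorProduct.map_tmul, LinearMap.id_coe, id_eq,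
    TensorProduct.tmul_sum, TensorProduct.sum_tmul, TensorProduct.assoc_tmul,
    List.length_take, List.length_drop, LinearEquiv.coe_coe]
  refine Eq.trans (aux_sum4 (L.length + R.length) R.length (fun i => R.length - i)
      (fun i j => L.length) (fun i j a => L.length - a)
      (fun i j a b => (Finsupp.single (List.take a L, L.getD a v,
            List.take b (List.drop (a + 1) L)) 1 : DiassC K V) ⊗ₜ[K]
        ((Finsupp.single (List.drop (a + b + 1) L, v, List.take i R) 1 : DiassC K V) ⊗ₜ[K]
         (Finsupp.single (List.take j (List.drop i R), R.getD (i + j) v,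
            List.drop (i + j + 1) R) 1 : DiassC K V)))
      (Nat.le_add_left _ _) (fun i => le_trans (Nat.sub_le _ _) (Nat.le_add_left _ _))
      (fun i j => Nat.le_add_right _ _)
      (fun i j a => le_trans (Nat.sub_le _ _) (Nat.le_add_right _ _)))
    (Eq.trans ?_ (aux_sum4 (L.length + R.length) L.length (fun a => L.length - a)
      (fun a b => R.length) (fun a b i => R.length - i)
      (fun a b i j => (Finsupp.single (List.take a L, L.getD a v,
            List.take b (List.drop (a + 1) L)) 1 : DiassC K V) ⊗ₜ[K]
        ((Finsupp.single (List.drop (a + b + 1) L, v, List.take i R) 1 : DiassC K V) ⊗ₜ[K]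
         (Finsupp.single (List.take j (List.drop i R), R.getD (i + j) v,
            List.drop (i + j + 1) R) 1 : DiassC K V)))
      (Nat.le_add_right _ _) (fun a => le_trans (Nat.sub_le _ _) (Nat.le_add_right _ _))
      (fun a b => Nat.le_add_left _ _)
      (fun a b i => le_trans (Nat.sub_le _ _) (Nat.le_add_left _ _))).symm)
  refine Finset.sum_nbij' (fun t => (t.2.2.1, t.2.2.2, t.1, t.2.1))
    (fun t => (t.2.2.1, t.2.2.2, t.1, t.2.1)) ?_ ?_ ?_ ?_ ?_
  · intro t ht
    obtain ⟨i, j, a, b⟩ := t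
    simp only [Finset.mem_filter, Finset.mem_product, Finset.mem_range] at ht ⊢
    omega
  · intro t ht
    obtain ⟨a, b, i, j⟩ := t
    simp only [Finset.mem_filter, Finset.mem_product, Finset.mem_range] at ht ⊢
    omega
  · intro t ht
    obtain ⟨i, j, a, b⟩ := t
    rfl
  · intro t ht
    obtain ⟨a, b, i, j⟩ := t
    rfl
  · intro t ht
    obtain ⟨i, j, a, b⟩ := t
    rfl

private lemma aux_core4 {K : Type*} [Field K] {V : Type*} (L : List V) (v : V) (R : List V) :
    ((TensorProduct.assoc K (DiassC K V) (DiassC K V) (DiassC K V)).toLinearMap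
        ∘ₗ TensorProduct.map delta1 LinearMap.id ∘ₗ delta2) (wd (L, v, R))
      = (TensorProduct.map LinearMap.id (delta2 (K := K) (V := V)) ∘ₗ delta2) (wd (L, v, R)) := by
  simp only [LinearMap.comp_apply, delta1, delta2, wd, Finsupp.lift_apply,
    Finsupp.sum_single_index, zero_smul, one_smul, delta1Fun, delta2Fun,
    map_sum, TensorProduct.map_tmul, LinearMap.id_coe, id_eq,
    TensorProduct.tmul_sum, TensorProduct.sum_tmul, TensorProduct.assoc_tmul,
    List.length_take, List.length_drop, LinearEquiv.coe_coe]
  refine Eq.trans (aux_sum4 L.length L.length (fun a => L.length - a)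
      (fun a b => b ⊓ (L.length - (a + 1))) (fun a b p => b ⊓ (L.length - (a + 1)) - p)
      (fun a b p q => (Finsupp.single (List.take a L, L.getD a v,
            List.take p (List.take b (List.drop (a + 1) L))) 1 : DiassC K V) ⊗ₜ[K]
        ((Finsupp.single (List.take q (List.drop p (List.take b (List.drop (a + 1) L))),
            (List.take b (List.drop (a + 1) L)).getD (p + q) (L.getD a v),
            List.drop (p + q + 1) (List.take b (List.drop (a + 1) L))) 1 : DiassC K V) ⊗ₜ[K]
         (Finsupp.single (List.drop (a + b + 1) L, v, R) 1 : DiassC K V)))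
      (le_refl _) (fun a => Nat.sub_le _ _)
      (fun a b => le_trans (min_le_right _ _) (Nat.sub_le _ _))
      (fun a b p => le_trans (Nat.sub_le _ _) (le_trans (min_le_right _ _) (Nat.sub_le _ _))))
    (Eq.trans ?_ (aux_sum4 L.length L.length (fun a => L.length - a)
      (fun a b => L.length - (a + b + 1)) (fun a b p => L.length - (a + b + 1) - p)
      (fun a b p q => (Finsupp.single (List.take a L, L.getD a v,
            List.take b (List.drop (a + 1) L)) 1 : DiassC K V) ⊗ₜ[K]
        ((Finsupp.single (List.take p (List.drop (a + b + 1) L),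
            (List.drop (a + b + 1) L).getD p v,
            List.take q (List.drop (p + 1) (List.drop (a + b + 1) L))) 1 : DiassC K V) ⊗ₜ[K]
         (Finsupp.single (List.drop (p + q + 1) (List.drop (a + b + 1) L), v, R) 1 : DiassC K V)))
      (le_refl _) (fun a => Nat.sub_le _ _) (fun a b => Nat.sub_le _ _)
      (fun a b p => le_trans (Nat.sub_le _ _) (Nat.sub_le _ _))).symm)
  refine Finset.sum_nbij' (fun t => (t.1, t.2.2.1, t.2.2.2, t.2.1 - t.2.2.1 - t.2.2.2 - 1))
    (fun t => (t.1, t.2.1 + t.2.2.1 + t.2.2.2 + 1, t.2.1, t.2.2.1)) ?_ ?_ ?_ ?_ ?_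
  · intro t ht
    obtain ⟨a, b, p, q⟩ := t
    simp only [Finset.mem_filter, Finset.mem_product, Finset.mem_range] at ht ⊢
    omega
  · intro t ht
    obtain ⟨a, b, p, q⟩ := t
    simp only [Finset.mem_filter, Finset.mem_product, Finset.mem_range] at ht ⊢
    omega
  · intro t ht
    obtain ⟨a, b, p, q⟩ := t
    simp only [Finset.mem_filter, Finset.mem_product, Finset.mem_range] at ht
    dsimp only
    simp only [Prod.mk.injEq, true_and, and_true]
    omega
  · intro t ht
    obtain ⟨a, b, p, q⟩ := t
    simp only [Finset.mem_filter, Finset.mem_product, Finset.mem_range] at ht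
    dsimp only
    simp only [Prod.mk.injEq, true_and, and_true]
    omega
  · intro t ht
    obtain ⟨a, b, p, q⟩ := t
    simp only [Finset.mem_filter, Finset.mem_product, Finset.mem_range] at ht
    dsimp only
    refine congrArg₂ (TensorProduct.tmul K) ?_ (congrArg₂ (TensorProduct.tmul K) ?_ ?_) <;>
      refine congrArg (fun z : List V × V × List V => (Finsupp.single z 1 : DiassC K V)) ?_ <;>
      simp only [Prod.mk.injEq, true_and, and_true]
    · simp only [List.take_take]
      refine aux_tdt _ ?_ rfl
      omega
    · refine ⟨?_, ?_, ?_⟩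
      · simp only [List.drop_take, List.take_take, List.drop_drop]
        refine aux_tdt _ ?_ ?_ <;> omega
      · refine ((aux_getD_take _ v ?_ ?_).trans
          (aux_getD_drop (k' := a + p + q + 1) _ v ?_ ?_)).trans
          (Eq.symm (aux_getD_drop v v ?_ ?_)) <;>
          (try simp only [List.length_drop]) <;> omega
      · simp only [List.drop_take, List.drop_drop]
        refine aux_tdt _ ?_ ?_ <;> omega
    · simp only [List.drop_drop]
      refine aux_dcong _ ?_
      omega

private lemma aux_core5 {K : Type*} [Field K] {V : Type*} (L : List V) (v : V) (R : List V) :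
    (TensorProduct.map LinearMap.id (delta2 (K := K) (V := V)) ∘ₗ delta2) (wd (L, v, R))
      = ((TensorProduct.assoc K (DiassC K V) (DiassC K V) (DiassC K V)).toLinearMap
          ∘ₗ TensorProduct.map delta2 LinearMap.id ∘ₗ delta2) (wd (L, v, R)) := by
  simp only [LinearMap.comp_apply, delta1, delta2, wd, Finsupp.lift_apply,
    Finsupp.sum_single_index, zero_smul, one_smul, delta1Fun, delta2Fun,
    map_sum, TensorProduct.map_tmul, LinearMap.id_coe, id_eq,
    TensorProduct.tmul_sum, TensorProduct.sum_tmul, TensorProduct.assoc_tmul,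
    List.length_take, List.length_drop, LinearEquiv.coe_coe]
  refine Eq.trans (aux_sum4 L.length L.length (fun a => L.length - a)
      (fun a b => L.length - (a + b + 1)) (fun a b p => L.length - (a + b + 1) - p)
      (fun a b p q => (Finsupp.single (List.take a L, L.getD a v,
            List.take b (List.drop (a + 1) L)) 1 : DiassC K V) ⊗ₜ[K]
        ((Finsupp.single (List.take p (List.drop (a + b + 1) L),
            (List.drop (a + b + 1) L).getD p v,
            List.take q (List.drop (p + 1) (List.drop (a + b + 1) L))) 1 : DiassC K V) ⊗ₜ[K]
         (Finsupp.single (List.drop (p + q + 1) (List.drop (a + b + 1) L), v, R) 1 : DiassC K V)))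
      (le_refl _) (fun a => Nat.sub_le _ _) (fun a b => Nat.sub_le _ _)
      (fun a b p => le_trans (Nat.sub_le _ _) (Nat.sub_le _ _)))
    (Eq.trans ?_ (aux_sum4 L.length L.length (fun a => L.length - a)
      (fun a b => a ⊓ L.length) (fun a b p => a ⊓ L.length - p)
      (fun a b p q => (Finsupp.single (List.take p (List.take a L),
            (List.take a L).getD p (L.getD a v),
            List.take q (List.drop (p + 1) (List.take a L))) 1 : DiassC K V) ⊗ₜ[K]
        ((Finsupp.single (List.drop (p + q + 1) (List.take a L), L.getD a v,
            List.take b (List.drop (a + 1) L)) 1 : DiassC K V) ⊗ₜ[K]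
         (Finsupp.single (List.drop (a + b + 1) L, v, R) 1 : DiassC K V)))
      (le_refl _) (fun a => Nat.sub_le _ _) (fun a b => min_le_right _ _)
      (fun a b p => le_trans (Nat.sub_le _ _) (min_le_right _ _))).symm)
  refine Finset.sum_nbij' (fun t => (t.1 + t.2.1 + 1 + t.2.2.1, t.2.2.2, t.1, t.2.1))
    (fun t => (t.2.2.1, t.2.2.2, t.1 - t.2.2.1 - t.2.2.2 - 1, t.2.1)) ?_ ?_ ?_ ?_ ?_
  · intro t ht
    obtain ⟨a, b, p, q⟩ := t
    simp only [Finset.mem_filter, Finset.mem_product, Finset.mem_range] at ht ⊢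
    omega
  · intro t ht
    obtain ⟨a, b, p, q⟩ := t
    simp only [Finset.mem_filter, Finset.mem_product, Finset.mem_range] at ht ⊢
    omega
  · intro t ht
    obtain ⟨a, b, p, q⟩ := t
    dsimp only
    simp only [Prod.mk.injEq, true_and, and_true]
    omega
  · intro t ht
    obtain ⟨a, b, p, q⟩ := t
    simp only [Finset.mem_filter, Finset.mem_product, Finset.mem_range] at ht
    dsimp only
    simp only [Prod.mk.injEq, true_and, and_true]
    omega
  · intro t ht
    obtain ⟨a, b, p, q⟩ := t
    simp only [Finset.mem_filter, Finset.mem_product, Finset.mem_range] at ht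
    dsimp only
    refine congrArg₂ (TensorProduct.tmul K) ?_ (congrArg₂ (TensorProduct.tmul K) ?_ ?_) <;>
      refine congrArg (fun z : List V × V × List V => (Finsupp.single z 1 : DiassC K V)) ?_ <;>
      simp only [Prod.mk.injEq, true_and, and_true]
    · refine ⟨?_, ?_, ?_⟩
      · rw [List.take_take]
        refine aux_tcong _ ?_
        omega
      · refine Eq.symm (aux_getD_take _ _ ?_ ?_) <;> omega
      · simp only [List.drop_take, List.take_take]
        refine aux_tdt _ ?_ rfl
        omega
    · refine ⟨?_, ?_, ?_⟩
      · simp only [List.drop_take]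
        refine aux_tdt _ ?_ rfl
        omega
      · refine aux_getD_drop _ _ ?_ ?_ <;> omega
      · simp only [List.drop_drop]
        refine aux_tdt _ rfl ?_
        omega
    · simp only [List.drop_drop]
      refine aux_dcong _ ?_
      omega

/-- `(Diass^c(V) = TV ⊗ V ⊗ TV, Δ₁, Δ₂)` is a diassociative
coalgebra: `(id ⊗ Δ₁)Δ₁ = (Δ₁ ⊗ id)Δ₁ = (id ⊗ Δ₂)Δ₁`,
`(Δ₂ ⊗ id)Δ₁ = (id ⊗ Δ₁)Δ₂`, and
`(Δ₁ ⊗ id)Δ₂ = (id ⊗ Δ₂)Δ₂ = (Δ₂ ⊗ id)Δ₂` (the associator of the tensor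
product is used to compare the two sides). -/
theorem diassC_is_diassociative_coalgebra
    {K : Type*} [Field K] (V : Type*) :
    let d1 := delta1 (K := K) (V := V)
    let d2 := delta2 (K := K) (V := V)
    let α := (TensorProduct.assoc K (DiassC K V) (DiassC K V) (DiassC K V)).toLinearMap
    (TensorProduct.map LinearMap.id d1 ∘ₗ d1
        = α ∘ₗ TensorProduct.map d1 LinearMap.id ∘ₗ delta1) ∧
    (TensorProduct.map LinearMap.id d1 ∘ₗ d1
        = TensorProduct.map LinearMap.id d2 ∘ₗ d1) ∧
    (α ∘ₗ TensorProduct.map d2 LinearMap.id ∘ₗ delta1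
        = TensorProduct.map LinearMap.id d1 ∘ₗ d2) ∧
    (α ∘ₗ TensorProduct.map d1 LinearMap.id ∘ₗ delta2
        = TensorProduct.map LinearMap.id d2 ∘ₗ d2) ∧
    (TensorProduct.map LinearMap.id d2 ∘ₗ d2
        = α ∘ₗ TensorProduct.map d2 LinearMap.id ∘ₗ delta2) := by
  intro d1 d2 α
  have key : ∀ (F G : DiassC K V →ₗ[K] DiassC K V ⊗[K] (DiassC K V ⊗[K] DiassC K V)),
      (∀ L (v : V) R, F (wd (L, v, R)) = G (wd (L, v, R))) → F = G := by
    intro F G h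
    refine Finsupp.lhom_ext fun x b => ?_
    obtain ⟨L, v, R⟩ := x
    have hb : (Finsupp.single (L, v, R) b : DiassC K V) = b • wd (L, v, R) := by
      rw [wd, Finsupp.smul_single, smul_eq_mul, mul_one]
    rw [hb, map_smul, map_smul]
    exact congrArg (b • ·) (h L v R)
  exact ⟨key _ _ (fun L v R => aux_core1 L v R),
    key _ _ (fun L v R => aux_core2 L v R),
    key _ _ (fun L v R => aux_core3 L v R),
    key _ _ (fun L v R => aux_core4 L v R),
    key _ _ (fun L v R => aux_core5 L v R)⟩
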